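/- Let n ≥ 1, let K : ℝⁿ → (n×n real symmetric matrices) be smooth (the inverse supermetric), and let ξ : ℝⁿ → ℝⁿ and ω : ℝⁿ → ℝ be smooth with £_ξ K = −ω·K, where (£_ξK)^{αβ} = Σ_ρ (ξ^ρ ∂K^{αβ}/∂q^ρ − (∂ξ^α/∂q^ρ) K^{ρβ} − (∂ξ^β/∂q^ρ) K^{αρ}). Define on phase space ℝⁿ × ℝⁿ the functions Q(q,π) = Σ_α ξ^α(q) π_α and T(q,π) = (1/2) Σ_{κ,λ} K^{κλ}(q) π_κ π_λ. Then the canonical Poisson bracket satisfies {Q, T} = (1/2) ω(q) Σ_{κ,λ} K^{κλ}(q) π_κ π_λ = ω·T. In particular, if additionally H(q,π) := T(q,π) + V̄ with constant potential V̄, then {Q, H} = ω·(H − V̄), so Q is a conditional symmetry: {Q, H} vanishes on the constraint surface H = 0 up to the factor ω. -/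

import Mathlib

open scoped BigOperators

/-- Partial derivative `∂f/∂q^α` of a scalar function on `ℝⁿ`. -/
noncomputable def pd {n : ℕ} (f : (Fin n → ℝ) → ℝ) (α : Fin n) (q : Fin n → ℝ) : ℝ :=
  fderiv ℝ f q (Pi.single α 1)

/-- Lie derivative of a contravariant 2-tensor (inverse metric):
`(£_ξK)^{αβ} = Σ_ρ (ξ^ρ ∂K^{αβ}/∂q^ρ − (∂ξ^α/∂q^ρ) K^{ρβ} − (∂ξ^β/∂q^ρ) K^{αρ})`. -/
noncomputable def lieK {n : ℕ} (ξ : (Fin n → ℝ) → Fin n → ℝ)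
    (K : (Fin n → ℝ) → Fin n → Fin n → ℝ) (q : Fin n → ℝ) (α β : Fin n) : ℝ :=
  ∑ ρ : Fin n, (ξ q ρ * pd (fun p => K p α β) ρ q
      - pd (fun p => ξ p α) ρ q * K q ρ β
      - pd (fun p => ξ p β) ρ q * K q α ρ)

/-- The canonical Poisson bracket on phase space `ℝⁿ × ℝⁿ`:
`{F,H} = Σ_α (∂F/∂q^α ∂H/∂π_α − ∂F/∂π_α ∂H/∂q^α)`. -/
noncomputable def pb {n : ℕ} (F H : (Fin n → ℝ) × (Fin n → ℝ) → ℝ)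
    (x : (Fin n → ℝ) × (Fin n → ℝ)) : ℝ :=
  ∑ α : Fin n, (fderiv ℝ F x (Pi.single α 1, 0) * fderiv ℝ H x (0, Pi.single α 1)
      - fderiv ℝ F x (0, Pi.single α 1) * fderiv ℝ H x (Pi.single α 1, 0))

/-- `Q(q,π) = Σ_α ξ^α(q) π_α`. -/
noncomputable def Qfun {n : ℕ} (ξ : (Fin n → ℝ) → Fin n → ℝ)
    (x : (Fin n → ℝ) × (Fin n → ℝ)) : ℝ :=
  ∑ α : Fin n, ξ x.1 α * x.2 α

/-- `T(q,π) = (1/2) Σ_{κλ} K^{κλ}(q) π_κ π_λ`. -/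
noncomputable def Tfun {n : ℕ} (K : (Fin n → ℝ) → Fin n → Fin n → ℝ)
    (x : (Fin n → ℝ) × (Fin n → ℝ)) : ℝ :=
  (1 / 2) * ∑ κ : Fin n, ∑ lam : Fin n, K x.1 κ lam * x.2 κ * x.2 lam

/- ===== auxiliary lemmas ===== -/

lemma fderivQ {n : ℕ} (ξ : (Fin n → ℝ) → Fin n → ℝ) (hξ : ContDiff ℝ (⊤ : ℕ∞) ξ)
    (x : (Fin n → ℝ) × (Fin n → ℝ)) (v w : Fin n → ℝ) :
    fderiv ℝ (Qfun ξ) x (v, w)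
      = ∑ α : Fin n, (fderiv ℝ (fun q => ξ q α) x.1 v * x.2 α + ξ x.1 α * w α) := by
  have hξα : ∀ α, Differentiable ℝ (fun q => ξ q α) := fun α =>
    (differentiable_pi.mp (hξ.differentiable (by simp))) α
  have h1 : ∀ α : Fin n, HasFDerivAt (fun y : (Fin n → ℝ) × (Fin n → ℝ) => ξ y.1 α)
      ((fderiv ℝ (fun q => ξ q α) x.1).comp (ContinuousLinearMap.fst ℝ _ _)) x :=
    fun α => ((hξα α x.1).hasFDerivAt).comp x hasFDerivAt_fst
  have h2 : ∀ α : Fin n, HasFDerivAt (fun y : (Fin n → ℝ) × (Fin n → ℝ) => y.2 α)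
      ((ContinuousLinearMap.proj α).comp (ContinuousLinearMap.snd ℝ (Fin n → ℝ) (Fin n → ℝ))) x :=
    fun α => ((ContinuousLinearMap.proj α).comp
      (ContinuousLinearMap.snd ℝ (Fin n → ℝ) (Fin n → ℝ))).hasFDerivAt
  have h3 : HasFDerivAt (Qfun ξ)
      (∑ α : Fin n, (ξ x.1 α • ((ContinuousLinearMap.proj α).comp
          (ContinuousLinearMap.snd ℝ (Fin n → ℝ) (Fin n → ℝ)))
        + x.2 α • ((fderiv ℝ (fun q => ξ q α) x.1).comp (ContinuousLinearMap.fst ℝ _ _)))) x :=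
    HasFDerivAt.fun_sum (fun α _ => (h1 α).mul (h2 α))
  rw [h3.fderiv]
  simp [ContinuousLinearMap.sum_apply]
  exact Finset.sum_congr rfl fun α _ => by ring

lemma fderivT {n : ℕ} (K : (Fin n → ℝ) → Fin n → Fin n → ℝ)
    (hK : ∀ α β, ContDiff ℝ (⊤ : ℕ∞) fun q => K q α β)
    (x : (Fin n → ℝ) × (Fin n → ℝ)) (v w : Fin n → ℝ) :
    fderiv ℝ (Tfun K) x (v, w)
      = (1 / 2 : ℝ) * ∑ κ : Fin n, ∑ lam : Fin n,
          (fderiv ℝ (fun q => K q κ lam) x.1 v * x.2 κ * x.2 lam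
            + K x.1 κ lam * w κ * x.2 lam + K x.1 κ lam * x.2 κ * w lam) := by
  have hKd : ∀ α β, Differentiable ℝ (fun q => K q α β) := fun α β =>
    (hK α β).differentiable (by simp)
  have h1 : ∀ κ lam : Fin n, HasFDerivAt (fun y : (Fin n → ℝ) × (Fin n → ℝ) => K y.1 κ lam)
      ((fderiv ℝ (fun q => K q κ lam) x.1).comp (ContinuousLinearMap.fst ℝ _ _)) x :=
    fun κ lam => ((hKd κ lam x.1).hasFDerivAt).comp x hasFDerivAt_fst
  have h2 : ∀ α : Fin n, HasFDerivAt (fun y : (Fin n → ℝ) × (Fin n → ℝ) => y.2 α)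
      ((ContinuousLinearMap.proj α).comp (ContinuousLinearMap.snd ℝ (Fin n → ℝ) (Fin n → ℝ))) x :=
    fun α => ((ContinuousLinearMap.proj α).comp
      (ContinuousLinearMap.snd ℝ (Fin n → ℝ) (Fin n → ℝ))).hasFDerivAt
  have h3 : HasFDerivAt (Tfun K)
      ((1 / 2 : ℝ) • ∑ κ : Fin n, ∑ lam : Fin n,
        ((K x.1 κ lam * x.2 κ) • ((ContinuousLinearMap.proj lam).comp
            (ContinuousLinearMap.snd ℝ (Fin n → ℝ) (Fin n → ℝ)))
          + x.2 lam • (K x.1 κ lam • ((ContinuousLinearMap.proj κ).comp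
              (ContinuousLinearMap.snd ℝ (Fin n → ℝ) (Fin n → ℝ)))
            + x.2 κ • ((fderiv ℝ (fun q => K q κ lam) x.1).comp
                (ContinuousLinearMap.fst ℝ (Fin n → ℝ) (Fin n → ℝ)))))) x := by
    exact HasFDerivAt.const_mul (HasFDerivAt.fun_sum (fun κ _ =>
      HasFDerivAt.fun_sum (fun lam _ => ((h1 κ lam).mul (h2 κ)).mul (h2 lam)))) (1/2 : ℝ)
  rw [h3.fderiv]
  simp only [ContinuousLinearMap.smul_apply, ContinuousLinearMap.sum_apply,
    ContinuousLinearMap.add_apply, ContinuousLinearMap.comp_apply,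
    ContinuousLinearMap.coe_fst', ContinuousLinearMap.coe_snd',
    ContinuousLinearMap.proj_apply, smul_eq_mul]
  rw [mul_eq_mul_left_iff]
  left
  refine Finset.sum_congr rfl fun κ _ => Finset.sum_congr rfl fun lam _ => by ring

lemma sum_rot {n : ℕ} (f : Fin n → Fin n → Fin n → ℝ) :
    ∑ ρ : Fin n, ∑ κ : Fin n, ∑ lam : Fin n, f ρ κ lam
      = ∑ κ : Fin n, ∑ lam : Fin n, ∑ ρ : Fin n, f ρ κ lam := by
  rw [Finset.sum_comm]
  exact Finset.sum_congr rfl fun κ _ => Finset.sum_comm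

lemma alg {n : ℕ} (xi π : Fin n → ℝ) (Dxi Kq : Fin n → Fin n → ℝ)
    (DK : Fin n → Fin n → Fin n → ℝ) (w : ℝ)
    (hsym : ∀ a b, Kq a b = Kq b a)
    (hlie : ∀ α β, ∑ ρ : Fin n, (xi ρ * DK α β ρ - Dxi α ρ * Kq ρ β - Dxi β ρ * Kq α ρ)
      = -w * Kq α β) :
    ∑ ρ : Fin n, ((∑ α : Fin n, Dxi α ρ * π α) * (∑ lam : Fin n, Kq ρ lam * π lam)
        - xi ρ * ((1 / 2 : ℝ) * ∑ κ : Fin n, ∑ lam : Fin n, DK κ lam ρ * π κ * π lam))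
      = (1 / 2) * w * ∑ κ : Fin n, ∑ lam : Fin n, Kq κ lam * π κ * π lam := by
  have key : ∀ κ lam : Fin n,
      ∑ ρ : Fin n, xi ρ * DK κ lam ρ * π κ * π lam
        = (∑ ρ : Fin n, (Dxi κ ρ * Kq ρ lam * π κ * π lam
            + Dxi lam ρ * Kq κ ρ * π κ * π lam))
          - w * (Kq κ lam * π κ * π lam) := by
    intro κ lam
    have expand : ∀ ρ : Fin n, xi ρ * DK κ lam ρ * π κ * π lam
        = (xi ρ * DK κ lam ρ - Dxi κ ρ * Kq ρ lam - Dxi lam ρ * Kq κ ρ) * (π κ * π lam)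
          + (Dxi κ ρ * Kq ρ lam * π κ * π lam + Dxi lam ρ * Kq κ ρ * π κ * π lam) :=
      fun ρ => by ring
    rw [Finset.sum_congr rfl (fun ρ _ => expand ρ), Finset.sum_add_distrib,
      ← Finset.sum_mul, hlie κ lam]
    ring
  set A := ∑ κ : Fin n, ∑ lam : Fin n, ∑ ρ : Fin n, Dxi κ ρ * Kq ρ lam * π κ * π lam with hAdef
  set S := ∑ κ : Fin n, ∑ lam : Fin n, Kq κ lam * π κ * π lam with hSdef
  have hB : (∑ κ : Fin n, ∑ lam : Fin n, ∑ ρ : Fin n, Dxi lam ρ * Kq κ ρ * π κ * π lam) = A := by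
    rw [hAdef, Finset.sum_comm]
    refine Finset.sum_congr rfl fun κ _ => Finset.sum_congr rfl fun lam _ =>
      Finset.sum_congr rfl fun ρ _ => ?_
    rw [hsym lam ρ]; ring
  have hT1 : (∑ ρ : Fin n, (∑ α : Fin n, Dxi α ρ * π α) * (∑ lam : Fin n, Kq ρ lam * π lam))
      = A := by
    have step : ∀ ρ : Fin n, (∑ α : Fin n, Dxi α ρ * π α) * (∑ lam : Fin n, Kq ρ lam * π lam)
        = ∑ α : Fin n, ∑ lam : Fin n, Dxi α ρ * Kq ρ lam * π α * π lam := by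
      intro ρ
      rw [Finset.sum_mul_sum]
      exact Finset.sum_congr rfl fun α _ => Finset.sum_congr rfl fun lam _ => by ring
    rw [Finset.sum_congr rfl (fun ρ _ => step ρ), sum_rot, hAdef]
  have hT2 : (∑ ρ : Fin n, xi ρ * ((1 / 2 : ℝ)
        * ∑ κ : Fin n, ∑ lam : Fin n, DK κ lam ρ * π κ * π lam))
      = (1 / 2) * (A + A - w * S) := by
    have hρ : ∀ ρ : Fin n, xi ρ * ((1 / 2 : ℝ)
          * ∑ κ : Fin n, ∑ lam : Fin n, DK κ lam ρ * π κ * π lam)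
        = ∑ κ : Fin n, ∑ lam : Fin n, (1 / 2 : ℝ) * (xi ρ * DK κ lam ρ * π κ * π lam) := by
      intro ρ
      simp only [Finset.mul_sum]
      exact Finset.sum_congr rfl fun κ _ => Finset.sum_congr rfl fun lam _ => by ring
    rw [Finset.sum_congr rfl (fun ρ _ => hρ ρ), sum_rot]
    have inner : ∀ κ lam : Fin n,
        (∑ ρ : Fin n, (1 / 2 : ℝ) * (xi ρ * DK κ lam ρ * π κ * π lam))
          = (1 / 2 : ℝ) * ((∑ ρ : Fin n, (Dxi κ ρ * Kq ρ lam * π κ * π lam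
              + Dxi lam ρ * Kq κ ρ * π κ * π lam)) - w * (Kq κ lam * π κ * π lam)) := by
      intro κ lam
      rw [← Finset.mul_sum, key κ lam]
    rw [Finset.sum_congr rfl (fun κ _ => Finset.sum_congr rfl (fun lam _ => inner κ lam))]
    simp only [mul_sub, Finset.sum_sub_distrib, Finset.sum_add_distrib, ← Finset.mul_sum]
    rw [hB]
  rw [Finset.sum_sub_distrib, hT1, hT2]
  ring

/-- if `£_ξ K = −ω·K`, then `{Q,T} = (1/2) ω Σ K^{κλ} π_κ π_λ = ω·T`, and
for `H = T + V̄` with constant `V̄`, `{Q,H} = ω·(H − V̄)`. -/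
theorem conditional_symmetry_poisson_bracket (n : ℕ) (hn : 1 ≤ n)
    (K : (Fin n → ℝ) → Fin n → Fin n → ℝ)
    (hKsmooth : ∀ α β, ContDiff ℝ (⊤ : ℕ∞) fun q => K q α β)
    (hKsymm : ∀ q α β, K q α β = K q β α)
    (ξ : (Fin n → ℝ) → Fin n → ℝ) (ω : (Fin n → ℝ) → ℝ)
    (hξsmooth : ContDiff ℝ (⊤ : ℕ∞) ξ)
    (hωsmooth : ContDiff ℝ (⊤ : ℕ∞) ω)
    (hlie : ∀ q α β, lieK ξ K q α β = -(ω q) * K q α β) :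
    (∀ x : (Fin n → ℝ) × (Fin n → ℝ),
      pb (Qfun ξ) (Tfun K) x
        = (1 / 2) * ω x.1 * ∑ κ : Fin n, ∑ lam : Fin n, K x.1 κ lam * x.2 κ * x.2 lam)
    ∧ (∀ x : (Fin n → ℝ) × (Fin n → ℝ), pb (Qfun ξ) (Tfun K) x = ω x.1 * Tfun K x)
    ∧ (∀ Vbar : ℝ, ∀ x : (Fin n → ℝ) × (Fin n → ℝ),
        pb (Qfun ξ) (fun y => Tfun K y + Vbar) x = ω x.1 * ((Tfun K x + Vbar) - Vbar)) := by
  have main : ∀ x : (Fin n → ℝ) × (Fin n → ℝ),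
      pb (Qfun ξ) (Tfun K) x
        = (1 / 2) * ω x.1 * ∑ κ : Fin n, ∑ lam : Fin n, K x.1 κ lam * x.2 κ * x.2 lam := by
    intro x
    have e1 : ∀ ρ : Fin n, fderiv ℝ (Qfun ξ) x (Pi.single ρ 1, 0)
        = ∑ α : Fin n, pd (fun p => ξ p α) ρ x.1 * x.2 α := by
      intro ρ
      rw [fderivQ ξ hξsmooth x (Pi.single ρ 1) 0]
      simp [pd]
    have e2 : ∀ ρ : Fin n, fderiv ℝ (Qfun ξ) x (0, Pi.single ρ 1) = ξ x.1 ρ := by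
      intro ρ
      rw [fderivQ ξ hξsmooth x 0 (Pi.single ρ 1)]
      simp [Pi.single_apply, mul_ite]
    have e3 : ∀ ρ : Fin n, fderiv ℝ (Tfun K) x (Pi.single ρ 1, 0)
        = (1 / 2 : ℝ) * ∑ κ : Fin n, ∑ lam : Fin n,
            pd (fun p => K p κ lam) ρ x.1 * x.2 κ * x.2 lam := by
      intro ρ
      rw [fderivT K hKsmooth x (Pi.single ρ 1) 0]
      simp [pd]
    have e4 : ∀ ρ : Fin n, fderiv ℝ (Tfun K) x (0, Pi.single ρ 1)
        = ∑ lam : Fin n, K x.1 ρ lam * x.2 lam := by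
      intro ρ
      rw [fderivT K hKsmooth x 0 (Pi.single ρ 1)]
      simp only [map_zero, zero_mul, zero_add, Pi.single_apply, mul_ite, ite_mul,
        mul_one, one_mul, mul_zero, zero_mul, Finset.sum_add_distrib,
        Finset.sum_ite_eq, Finset.sum_ite_eq', Finset.mem_univ, if_true]
      have hswap : (∑ κ : Fin n, K x.1 κ ρ * x.2 κ) = ∑ lam : Fin n, K x.1 ρ lam * x.2 lam :=
        Finset.sum_congr rfl fun κ _ => by rw [hKsymm x.1 κ ρ]
      have hite : (∑ a : Fin n, ∑ b : Fin n, if a = ρ then K x.1 a b * x.2 b else 0)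
          = ∑ b : Fin n, K x.1 ρ b * x.2 b := by
        rw [Finset.sum_congr rfl (fun a _ =>
          (by split <;> simp : (∑ b : Fin n, if a = ρ then K x.1 a b * x.2 b else 0)
            = if a = ρ then ∑ b : Fin n, K x.1 a b * x.2 b else 0))]
        simp
      rw [hite, hswap]
      ring
    have pbform : pb (Qfun ξ) (Tfun K) x
        = ∑ ρ : Fin n, ((∑ α : Fin n, pd (fun p => ξ p α) ρ x.1 * x.2 α)
            * (∑ lam : Fin n, K x.1 ρ lam * x.2 lam)
          - ξ x.1 ρ * ((1 / 2 : ℝ) * ∑ κ : Fin n, ∑ lam : Fin n,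
              pd (fun p => K p κ lam) ρ x.1 * x.2 κ * x.2 lam)) := by
      unfold pb
      exact Finset.sum_congr rfl fun ρ _ => by rw [e1 ρ, e2 ρ, e3 ρ, e4 ρ]
    rw [pbform]
    exact alg (ξ x.1) x.2 (fun α ρ => pd (fun p => ξ p α) ρ x.1) (K x.1)
      (fun κ lam ρ => pd (fun p => K p κ lam) ρ x.1) (ω x.1) (hKsymm x.1)
      (fun α β => hlie x.1 α β)
  refine ⟨main, ?_, ?_⟩
  · intro x
    rw [main x, Tfun]
    ring
  · intro Vbar x
    have hfd : ∀ d : (Fin n → ℝ) × (Fin n → ℝ),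
        fderiv ℝ (fun y => Tfun K y + Vbar) x d = fderiv ℝ (Tfun K) x d := by
      intro d; rw [fderiv_add_const]
    have : pb (Qfun ξ) (fun y => Tfun K y + Vbar) x = pb (Qfun ξ) (Tfun K) x := by
      unfold pb
      exact Finset.sum_congr rfl fun ρ _ => by rw [hfd, hfd]
    rw [this, main x, Tfun]
    ring
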